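/- Let $n, k$ be positive integers with $\gcd(k,n)=1$ and let $F$ be a finite field with $2^n$ elements. Then for all $b, c, d \in F$, the equation $x^{2^k+1} + b x^{2^k} + c x = d$ has at most three solutions $x \in F$. -/

import Mathlib

private lemma coprime_aux {k n : ℕ} (hgcd : Nat.gcd k n = 1) :
    Nat.Coprime (2 ^ k - 1) (2 ^ n - 1) := by
  unfold Nat.Coprime
  set e := Nat.gcd (2 ^ k - 1) (2 ^ n - 1) with he
  have key : ∀ m : ℕ, e ∣ 2 ^ m - 1 → (2 : ZMod e) ^ m = 1 := by
    intro m hd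
    have h2 : (1 : ℕ) ≤ 2 ^ m := Nat.one_le_two_pow
    have h3 : ((2 ^ m - 1 : ℕ) : ZMod e) = 0 :=
      (ZMod.natCast_eq_zero_iff _ _).2 hd
    push_cast [h2] at h3
    linear_combination h3
  have hk1 := key k (Nat.gcd_dvd_left _ _)
  have hn1 := key n (Nat.gcd_dvd_right _ _)
  have hg : (2 : ZMod e) ^ Nat.gcd k n = 1 := pow_gcd_eq_one.mpr ⟨hk1, hn1⟩
  rw [hgcd, pow_one] at hg
  have h1 : ((1 : ℕ) : ZMod e) = 0 := by
    push_cast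
    linear_combination hg
  exact Nat.dvd_one.mp ((ZMod.natCast_eq_zero_iff _ _).1 h1)

theorem stmt_3 (n k : ℕ) (hn : 0 < n) (hk : 0 < k) (hgcd : Nat.gcd k n = 1)
    (F : Type*) [Field F] [Fintype F] (hF : Fintype.card F = 2 ^ n)
    (b c d : F) :
    {x : F | x ^ (2 ^ k + 1) + b * x ^ (2 ^ k) + c * x = d}.ncard ≤ 3 := by
  classical
  -- characteristic 2
  obtain ⟨p, hp⟩ := CharP.exists F
  haveI := hp
  obtain ⟨m, hprime, hcard⟩ := FiniteField.card F p
  have hp2 : p = 2 := (Nat.prime_dvd_prime_iff_eq hprime Nat.prime_two).mp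
    (hprime.dvd_of_dvd_pow (show p ∣ 2 ^ n by rw [← hF, hcard]; exact dvd_pow_self p m.2.ne'))
  haveI hchar : CharP F 2 := hp2 ▸ hp
  have h2 : (2 : F) = 0 := by exact_mod_cast CharP.cast_eq_zero F 2
  set q := 2 ^ k with hq
  have hq1 : q - 1 + 1 = q := Nat.succ_pred_eq_of_pos (show 0 < q by rw [hq]; exact Nat.pow_pos (by norm_num))
  have frob : ∀ x y : F, (x + y) ^ q = x ^ q + y ^ q := by
    intro x y
    rw [hq]
    exact add_pow_char_pow x y 2 k
  -- injectivity of the (q-1)-power map on nonzero elements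
  have hinj : ∀ u v : F, u ≠ 0 → v ≠ 0 → u ^ (q - 1) = v ^ (q - 1) → u = v := by
    intro u v hu hv huv
    have hcop : (Nat.card Fˣ).Coprime (q - 1) := by
      rw [Nat.card_units, Nat.card_eq_fintype_card, hF]
      exact (coprime_aux hgcd).symm
    have := (powCoprime hcop).injective
      (a₁ := Units.mk0 u hu) (a₂ := Units.mk0 v hv)
    have heq : Units.mk0 u hu = Units.mk0 v hv := by
      apply this
      ext
      simpa [powCoprime] using huv
    simpa using congrArg Units.val heq
  set S : Set F := {x : F | x ^ (q + 1) + b * x ^ q + c * x = d} with hS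
  rcases S.eq_empty_or_nonempty with hSe | ⟨x0, hx0⟩
  · simp [hSe]
  have hx0' : x0 ^ q * x0 + b * x0 ^ q + c * x0 = d := by
    have := hx0
    simp only [hS, Set.mem_setOf_eq, pow_succ] at this
    exact this
  set B := x0 + b with hB
  set C := x0 ^ q + c with hC
  set T : Set F := {w : F | C * w ^ q + B * w = 1} with hT
  -- bound on T
  have hTcard : T.ncard ≤ 2 := by
    rcases T.eq_empty_or_nonempty with hTe | ⟨w0, hw0⟩
    · simp [hTe]
    set K : Set F := {u : F | C * u ^ q + B * u = 0} with hK
    have himg : (fun w => w + w0) '' T ⊆ K := by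
      rintro _ ⟨w, hw, rfl⟩
      simp only [hK, Set.mem_setOf_eq]
      rw [frob]
      have hw' : C * w ^ q + B * w = 1 := hw
      have hw0' : C * w0 ^ q + B * w0 = 1 := hw0
      linear_combination hw' + hw0' + h2
    have hKsub : (K \ {0}).Subsingleton := by
      intro u hu v hv
      obtain ⟨hu1, hu2⟩ := hu
      obtain ⟨hv1, hv2⟩ := hv
      have hu0 : u ≠ 0 := by simpa using hu2
      have hv0 : v ≠ 0 := by simpa using hv2
      have hu' : C * u ^ q = B * u := by
        have := hu1
        simp only [hK, Set.mem_setOf_eq] at this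
        linear_combination this - B * u * h2
      have hv' : C * v ^ q = B * v := by
        have := hv1
        simp only [hK, Set.mem_setOf_eq] at this
        linear_combination this - B * v * h2
      by_cases hCz : C = 0
      · -- then B = 0 and T would be empty
        have hB0 : B = 0 := by
          have : B * u = 0 := by rw [← hu', hCz]; ring
          rcases mul_eq_zero.mp this with h | h
          · exact h
          · exact absurd h hu0
        have : (0 : F) = 1 := by
          have hw0' : C * w0 ^ q + B * w0 = 1 := hw0
          rw [hCz, hB0] at hw0'
          simpa using hw0'
        exact absurd this.symm one_ne_zero
      · have hu'' : C * u ^ (q - 1) = B := by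
          apply mul_right_cancel₀ hu0
          rw [mul_assoc, ← pow_succ, hq1]
          exact hu'
        have hv'' : C * v ^ (q - 1) = B := by
          apply mul_right_cancel₀ hv0
          rw [mul_assoc, ← pow_succ, hq1]
          exact hv'
        exact hinj u v hu0 hv0 (mul_left_cancel₀ hCz (hu''.trans hv''.symm))
    have hKcard : K.ncard ≤ 2 := by
      have h1 : K ⊆ insert (0 : F) (K \ {0}) := by
        intro x hx
        by_cases hx0 : x = 0
        · simp [hx0]
        · exact Set.mem_insert_of_mem _ ⟨hx, hx0⟩
      calc K.ncard ≤ (insert (0 : F) (K \ {0})).ncard :=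
            Set.ncard_le_ncard h1 (Set.toFinite _)
        _ ≤ (K \ {0}).ncard + 1 := Set.ncard_insert_le _ _
        _ ≤ 1 + 1 := by
            have := (Set.ncard_le_one (Set.toFinite _)).mpr
              (fun a ha b hb => hKsub ha hb)
            omega
    calc T.ncard = ((fun w => w + w0) '' T).ncard :=
          (Set.ncard_image_of_injOn (fun a _ b _ h => by
            simpa using h)).symm
      _ ≤ K.ncard := Set.ncard_le_ncard himg (Set.toFinite _)
      _ ≤ 2 := hKcard
  -- map S \ {x0} into T
  have himgS : (fun x : F => (x + x0)⁻¹) '' (S \ {x0}) ⊆ T := by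
    rintro _ ⟨x, ⟨hxS, hxne⟩, rfl⟩
    have hxne' : x ≠ x0 := by simpa using hxne
    set z := x + x0 with hz
    have hz0 : z ≠ 0 := by
      intro h
      apply hxne'
      rw [hz] at h
      linear_combination h - x0 * h2
    have hxe : x0 + z = x := by rw [hz]; linear_combination x0 * h2
    have hx' : x ^ (q + 1) + b * x ^ q + c * x = d := hxS
    rw [← hxe, pow_succ, frob] at hx'
    have hzeq : z ^ q * z + B * z ^ q + C * z = 0 := by
      rw [hB, hC]
      linear_combination hx' - hx0'
    show C * (z⁻¹) ^ q + B * z⁻¹ = 1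
    rw [inv_pow]
    have hzq : z ^ q ≠ 0 := pow_ne_zero _ hz0
    field_simp
    linear_combination hzeq - z ^ q * z * h2
  have hinjS : Set.InjOn (fun x : F => (x + x0)⁻¹) (S \ {x0}) := by
    intro a ha b hb hab
    have := inv_injective hab
    exact add_right_cancel (a := a) (b := x0) (c := b) this
  calc S.ncard = (S \ {x0}).ncard + 1 :=
        (Set.ncard_diff_singleton_add_one hx0 (Set.toFinite _)).symm
    _ ≤ T.ncard + 1 := by
        have : (S \ {x0}).ncard = ((fun x : F => (x + x0)⁻¹) '' (S \ {x0})).ncard :=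
          (Set.ncard_image_of_injOn hinjS).symm
        rw [this]
        exact Nat.add_le_add_right (Set.ncard_le_ncard himgS (Set.toFinite _)) 1
    _ ≤ 2 + 1 := Nat.add_le_add_right hTcard 1
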